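/- Let p be a prime and G a finite p-group. Consider the simple graph T whose vertices are the cyclic subgroups of G, with C and C' adjacent iff (C < C' and |C'| = p·|C|) or (C' < C and |C| = p·|C'|). Then T is a tree (connected and acyclic). -/

import Mathlib

/-- The graph on the cyclic subgroups of `G`, with `C` and `C'` adjacent iff one is
properly contained in the other with index `p`. For a finite `p`-group this is (an
isomorphic copy of) the reduced graph `R₃(G)` of the directed power graph. -/
def cyclicSubgroupGraph (G : Type*) [Group G] (p : ℕ) :
    SimpleGraph {C : Subgroup G // ∃ g : G, C = Subgroup.zpowers g} where
  Adj C C' :=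
    (C.1 < C'.1 ∧ Nat.card C'.1 = p * Nat.card C.1) ∨
    (C'.1 < C.1 ∧ Nat.card C.1 = p * Nat.card C'.1)
  symm := by
    refine ⟨?_⟩
    rintro C C' (h | h)
    · exact Or.inr h
    · exact Or.inl h
  loopless := by
    refine ⟨?_⟩
    rintro C (h | h) <;> exact lt_irrefl _ h.1

open Subgroup

lemma aux_sub_eq {G : Type*} [Group G] [Finite G] {p : ℕ} (hp : p.Prime) (g : G)
    {A : Subgroup G} (hle : A ≤ zpowers g)
    (hcard : Nat.card (zpowers g) = p * Nat.card A) :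
    A = zpowers (g ^ p) := by
  have hN : 0 < Nat.card A := Nat.card_pos
  have horder : orderOf g = p * Nat.card A := by rw [← Nat.card_zpowers]; exact hcard
  have hle2 : A ≤ zpowers (g ^ p) := by
    intro x hx
    obtain ⟨m, hm⟩ := mem_zpowers_iff.mp (hle hx)
    have hx1 : x ^ (Nat.card A) = 1 := by
      have h := pow_card_eq_one' (G := A) (x := ⟨x, hx⟩)
      have h' := congrArg (Subtype.val) h
      push_cast at h'
      exact h'
    have h1 : g ^ (m * (Nat.card A : ℤ)) = 1 := by
      rw [zpow_mul, hm, zpow_natCast, hx1]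
    have h2 : (orderOf g : ℤ) ∣ m * (Nat.card A : ℤ) :=
      orderOf_dvd_iff_zpow_eq_one.mpr h1
    rw [horder] at h2
    have h3 : (p : ℤ) ∣ m := by
      have h2' : (Nat.card A : ℤ) * p ∣ (Nat.card A : ℤ) * m := by
        push_cast at h2 ⊢
        rw [mul_comm (Nat.card A : ℤ) m]
        rwa [mul_comm (p : ℤ) (Nat.card A : ℤ)] at h2
      exact (mul_dvd_mul_iff_left (by exact_mod_cast hN.ne' : (Nat.card A : ℤ) ≠ 0)).mp h2'
    obtain ⟨t, ht⟩ := h3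
    refine mem_zpowers_iff.mpr ⟨t, ?_⟩
    rw [← hm, ht, ← zpow_natCast g p, ← zpow_mul]
  have hcard2 : Nat.card (zpowers (g ^ p)) = Nat.card A := by
    rw [Nat.card_zpowers, orderOf_pow, horder,
      Nat.gcd_eq_right (dvd_mul_right p (Nat.card A)),
      Nat.mul_div_cancel_left _ hp.pos]
  exact eq_of_le_of_card_ge hle2 hcard2.le

lemma aux_parent_unique {G : Type*} [Group G] [Finite G] {p : ℕ} (hp : p.Prime)
    {C A B : Subgroup G} (hC : ∃ g, C = zpowers g) (hA : A ≤ C) (hB : B ≤ C)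
    (hcA : Nat.card C = p * Nat.card A) (hcB : Nat.card C = p * Nat.card B) : A = B := by
  obtain ⟨g, rfl⟩ := hC
  rw [aux_sub_eq hp g hA hcA, aux_sub_eq hp g hB hcB]

lemma aux_support_getElem? {V : Type*} {G : SimpleGraph V} {u v : V} (w : G.Walk u v) :
    ∀ i, i ≤ w.length → w.support[i]? = some (w.getVert i) := by
  induction w with
  | nil =>
    intro i hi
    simp only [SimpleGraph.Walk.length_nil, Nat.le_zero] at hi
    subst hi; simp
  | cons h q ih =>
    intro i hi
    cases i with
    | zero => simp
    | succ n =>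
      simp only [SimpleGraph.Walk.support_cons, List.getElem?_cons_succ,
        SimpleGraph.Walk.getVert_cons_succ]
      exact ih n (by simpa using hi)

lemma aux_cycle_getVert_inj {V : Type*} {G : SimpleGraph V} {v : V} {c : G.Walk v v}
    (hc : c.IsCycle) {i j : ℕ} (hi1 : 1 ≤ i) (hi2 : i ≤ c.length)
    (hj1 : 1 ≤ j) (hj2 : j ≤ c.length) (h : c.getVert i = c.getVert j) : i = j := by
  have hl : c.support.tail.length = c.length := by
    have := c.length_support
    simp [List.length_tail, this]
  have key : ∀ k, 1 ≤ k → k ≤ c.length → c.support.tail[k-1]? = some (c.getVert k) := by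
    intro k hk1 hk2
    rw [List.getElem?_tail]
    have : k - 1 + 1 = k := by omega
    rw [this]
    exact aux_support_getElem? c k hk2
  have h1 := key i hi1 hi2
  have h2 := key j hj1 hj2
  rw [h] at h1
  have := (List.getElem?_inj (l := c.support.tail) (by omega) hc.support_nodup).mp (h1.trans h2.symm)
  omega

/-- For a finite `p`-group `G`, the graph of cyclic subgroups with covering (index-`p`)
pairs as edges is a tree. -/
theorem cyclicSubgroupGraph_isTree_of_isPGroup
    {G : Type*} [Group G] [Finite G] (p : ℕ) (hp : p.Prime)
    (hG : IsPGroup p G) :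
    (cyclicSubgroupGraph G p).IsTree := by
  set VV := {C : Subgroup G // ∃ g : G, C = Subgroup.zpowers g} with hVV
  let root : VV := ⟨⊥, ⟨1, Subgroup.zpowers_one_eq_bot.symm⟩⟩
  -- every cyclic subgroup has p-power order
  have hpow : ∀ g : G, ∃ m : ℕ, orderOf g = p ^ m := by
    intro g
    obtain ⟨k, hk⟩ := hG g
    obtain ⟨m, _, hm⟩ := (Nat.dvd_prime_pow hp).mp (orderOf_dvd_of_pow_eq_one hk)
    exact ⟨m, hm⟩
  -- reachability from the root
  have hreach : ∀ n (C : VV), Nat.card C.1 ≤ n → (cyclicSubgroupGraph G p).Reachable root C := by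
    intro n
    induction n with
    | zero =>
      intro C hC
      exact absurd hC (by simpa using (Nat.card_pos (α := C.1)).ne')
    | succ n ih =>
      intro C hC
      obtain ⟨g, hg⟩ := C.2
      obtain ⟨m, hm⟩ := hpow g
      have hcardC : Nat.card C.1 = p ^ m := by
        rw [hg, Nat.card_zpowers, hm]
      cases m with
      | zero =>
        have hg1 : g = 1 := orderOf_eq_one_iff.mp (by rw [hm, pow_zero])
        have : C = root := by
          apply Subtype.ext
          rw [hg, hg1, Subgroup.zpowers_one_eq_bot]
        rw [this]
      | succ m' =>
        let C' : VV := ⟨zpowers (g ^ p), ⟨g ^ p, rfl⟩⟩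
        have hcardC' : Nat.card C'.1 = p ^ m' := by
          show Nat.card (zpowers (g ^ p)) = p ^ m'
          rw [Nat.card_zpowers, orderOf_pow, hm,
            Nat.gcd_eq_right (dvd_pow_self p (Nat.succ_ne_zero m')),
            pow_succ, Nat.mul_div_cancel _ hp.pos]
        have hle : C'.1 ≤ C.1 := by
          rw [hg]
          exact Subgroup.zpowers_le.mpr (Subgroup.pow_mem _ (Subgroup.mem_zpowers g) p)
        have hltpow : p ^ m' < p ^ (m' + 1) :=
          Nat.pow_lt_pow_right hp.one_lt (Nat.lt_succ_self m')
        have hlt : C'.1 < C.1 := by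
          refine lt_of_le_of_ne hle (fun h => ?_)
          rw [← h, hcardC'] at hcardC
          omega
        have hadj : (cyclicSubgroupGraph G p).Adj C' C :=
          Or.inl ⟨hlt, by rw [hcardC, hcardC', pow_succ, mul_comm]⟩
        have : Nat.card C'.1 ≤ n := by
          rw [hcardC']; rw [hcardC] at hC; omega
        exact (ih C' this).trans hadj.reachable
  constructor
  · exact (SimpleGraph.connected_iff (cyclicSubgroupGraph G p)).mpr
      ⟨fun a b => ((hreach _ a le_rfl).symm.trans (hreach _ b le_rfl)), ⟨root⟩⟩
  · -- acyclic
    intro v c hc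
    have hn3 : 3 ≤ c.length := hc.three_le_length
    set n := c.length with hn
    have hp2 := hp.two_le
    have hcpos : ∀ j : ℕ, 0 < Nat.card (c.getVert j).1 := fun j => Nat.card_pos
    obtain ⟨i, hi, hmax⟩ := Finset.exists_max_image (Finset.range (n + 1))
      (fun j => Nat.card (c.getVert j).1) ⟨0, by simp⟩
    rw [Finset.mem_range] at hi
    have hv0n : c.getVert n = c.getVert 0 := by
      rw [c.getVert_length, c.getVert_zero]
    set i' : ℕ := if i = n then 0 else i with hi'
    have hi'n : i' < n := by
      rw [hi']; split
      · omega
      · omega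
    have hgi' : c.getVert i' = c.getVert i := by
      rw [hi']; split
      · rename_i h; rw [h, hv0n]
      · rfl
    have hmax' : ∀ j, j ≤ n → Nat.card (c.getVert j).1 ≤ Nat.card (c.getVert i').1 := by
      intro j hj
      rw [hgi']
      exact hmax j (Finset.mem_range.mpr (by omega))
    set u : VV := c.getVert i' with hu
    have hupos : 0 < Nat.card u.1 := Nat.card_pos
    have claim : ∀ a b : ℕ, 1 ≤ a → a ≤ n → 1 ≤ b → b ≤ n →
        (cyclicSubgroupGraph G p).Adj (c.getVert a) u →
        (cyclicSubgroupGraph G p).Adj (c.getVert b) u → a = b := by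
      intro a b ha1 ha2 hb1 hb2 hadja hadjb
      have hlower : ∀ k : ℕ, k ≤ n → (cyclicSubgroupGraph G p).Adj (c.getVert k) u →
          (c.getVert k).1 ≤ u.1 ∧ Nat.card u.1 = p * Nat.card (c.getVert k).1 := by
        intro k hk hadj
        rcases hadj with h | h
        · exact ⟨h.1.le, h.2⟩
        · exfalso
          have h1 := h.2
          have h2 := hmax' k hk
          nlinarith [hcpos k]
      obtain ⟨hlea, hcarda⟩ := hlower a ha2 hadja
      obtain ⟨hleb, hcardb⟩ := hlower b hb2 hadjb
      have heq : c.getVert a = c.getVert b :=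
        Subtype.ext (aux_parent_unique hp u.2 hlea hleb hcarda hcardb)
      exact aux_cycle_getVert_inj hc ha1 ha2 hb1 hb2 heq
    have hSadj : (cyclicSubgroupGraph G p).Adj (c.getVert (i' + 1)) u :=
      (hu ▸ c.adj_getVert_succ (by omega)).symm
    have hSn : i' + 1 ≤ n := by omega
    by_cases h0 : i' = 0
    · have hadjP : (cyclicSubgroupGraph G p).Adj (c.getVert (n - 1)) u := by
        have := c.adj_getVert_succ (i := n - 1) (by omega)
        have hsucc : n - 1 + 1 = n := by omega
        rw [hsucc, hv0n] at this
        rw [hu, h0]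
        exact this
      have := claim (n - 1) (i' + 1) (by omega) (by omega) (by omega) hSn hadjP hSadj
      omega
    · by_cases h1 : i' = 1
      · have hadjP : (cyclicSubgroupGraph G p).Adj (c.getVert n) u := by
          have : (cyclicSubgroupGraph G p).Adj (c.getVert 0) (c.getVert 1) :=
            c.adj_getVert_succ (by omega)
          rw [← hv0n] at this
          rw [hu, h1]
          exact this
        have := claim n (i' + 1) (by omega) le_rfl (by omega) hSn hadjP hSadj
        omega
      · have hadjP : (cyclicSubgroupGraph G p).Adj (c.getVert (i' - 1)) u := by
          have := c.adj_getVert_succ (i := i' - 1) (by omega)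
          have hsucc : i' - 1 + 1 = i' := by omega
          rw [hsucc] at this
          rw [hu]
          exact this
        have := claim (i' - 1) (i' + 1) (by omega) (by omega) (by omega) hSn hadjP hSadj
        omega
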